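/- Let t ∈ PT_n be a planar tree and ω a weight of length n. If 𝒩 ≺ 𝒩' is a covering relation of the poset of maximal nestings (MN(t),<), then the edge vector from M(t,𝒩,ω) to M(t,𝒩',ω) has the form (0,…,0, x, 0,…,0, −x, 0,…,0) with x > 0, where x occurs in position j and −x in position j' with j < j', j and j' being the unique edges such that min𝒩(j) is the nest of 𝒩 \ 𝒩' and min𝒩'(j') is the nest of 𝒩' \ 𝒩. Consequently, any vector v ∈ ℝ^{n−1} with strictly decreasing coordinates satisfies ⟨M(t,𝒩',ω) − M(t,𝒩,ω), v⟩ > 0 for every covering relation, i.e. v induces the poset of maximal nestings (MN(t),<) on the set of vertices of P_{(t,ω)}. -/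

import Mathlib

open scoped BigOperators

noncomputable section

/-- Vectors in `ℝⁿ`. -/
abbrev Vec (n : ℕ) := Fin n → ℝ

/-- The standard scalar product on `ℝⁿ`. -/
def dot {n : ℕ} (x y : Vec n) : ℝ := ∑ i, x i * y i

/-- A polytope is the convex hull of a finite set of points. -/
def IsPolytope {n : ℕ} (P : Set (Vec n)) : Prop :=
  ∃ S : Finset (Vec n), P = convexHull ℝ (S : Set (Vec n))

/-- A face of `P`: either `P` itself (take `c = 0`) or the subset of `P` where some linear
functional attains its maximum over `P`. -/
def IsFace {n : ℕ} (P F : Set (Vec n)) : Prop :=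
  ∃ c : Vec n, F = {x ∈ P | ∀ y ∈ P, dot c y ≤ dot c x}

/-- Dimension of a subset of `ℝⁿ`: the rank of the direction of its affine span. -/
noncomputable def sdim {n : ℕ} (A : Set (Vec n)) : ℕ :=
  Module.finrank ℝ (affineSpan ℝ A).direction

/-- The normal cone of a face `F` of `P`. -/
def normalCone {n : ℕ} (P F : Set (Vec n)) : Set (Vec n) :=
  {c | F ⊆ {x ∈ P | ∀ y ∈ P, dot c y ≤ dot c x}}

/-- `coneOf X`: nonnegative linear combinations of finitely many elements of `X`. -/
def coneOf {n : ℕ} (X : Set (Vec n)) : Set (Vec n) :=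
  {v | ∃ (k : ℕ) (x : Fin k → Vec n) (l : Fin k → ℝ),
      (∀ i, x i ∈ X) ∧ (∀ i, 0 ≤ l i) ∧ v = ∑ i, l i • x i}

/-- The reflection `ρ_z P = 2z - P` of `P` with respect to `z`. -/
def reflP {n : ℕ} (z : Vec n) (P : Set (Vec n)) : Set (Vec n) :=
  (fun x => (2 : ℝ) • z - x) '' P

/-- An edge is a 1-dimensional face. -/
def IsEdge {n : ℕ} (P E : Set (Vec n)) : Prop := IsFace P E ∧ sdim E = 1

/-- `(P, v)` is oriented if `v` is not perpendicular to any edge of `P`. -/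
def Oriented {n : ℕ} (P : Set (Vec n)) (v : Vec n) : Prop :=
  ∀ E, IsEdge P E → ∀ d ∈ (affineSpan ℝ E).direction, d ≠ 0 → dot d v ≠ 0

/-- `(P, v)` is positively oriented if `(P ∩ ρ_z P, v)` is oriented for every `z ∈ P`. -/
def PosOriented {n : ℕ} (P : Set (Vec n)) (v : Vec n) : Prop :=
  ∀ z ∈ P, Oriented (P ∩ reflP z P) v

/-- `x` is the minimizer of `⟨-, v⟩` on `P`. -/
def IsBotOf {n : ℕ} (P : Set (Vec n)) (v x : Vec n) : Prop :=
  x ∈ P ∧ ∀ y ∈ P, dot v x ≤ dot v y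

/-- `x` is the maximizer of `⟨-, v⟩` on `P`. -/
def IsTopOf {n : ℕ} (P : Set (Vec n)) (v x : Vec n) : Prop :=
  x ∈ P ∧ ∀ y ∈ P, dot v y ≤ dot v x

/-- `(P, v)` is quasi-oriented if `⟨-, v⟩` has a unique minimizer and a unique maximizer on `P`. -/
def QuasiOriented {n : ℕ} (P : Set (Vec n)) (v : Vec n) : Prop :=
  (∃! x, IsBotOf P v x) ∧ (∃! x, IsTopOf P v x)

/-- `(P, v)` is quasi-positively oriented if `(P ∩ ρ_z P, v)` is quasi-oriented for all `z ∈ P`. -/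
def QuasiPosOriented {n : ℕ} (P : Set (Vec n)) (v : Vec n) : Prop :=
  ∀ z ∈ P, QuasiOriented (P ∩ reflP z P) v

/-- The polytope `P^φ = π^φ(P × P) ⊆ ℝ^{n+1}`, where `π^φ(x,y) = ((x+y)/2, ⟨x - y, v⟩)`. -/
def Pphi {n : ℕ} (P : Set (Vec n)) (v : Vec n) : Set (Vec (n + 1)) :=
  {w | ∃ x ∈ P, ∃ y ∈ P, w = Fin.snoc ((1 / 2 : ℝ) • (x + y)) (dot (x - y) v)}

/-- The pair of faces `(F, G)` belongs to `F^φ`: there are no `x ∈ F`, `y ∈ G`, `λ > 0` with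
`(π(x,y), φ(x,y) - λ) ∈ P^φ`. -/
def InFphi {n : ℕ} (P : Set (Vec n)) (v : Vec n) (F G : Set (Vec n)) : Prop :=
  ¬ ∃ x ∈ F, ∃ y ∈ G, ∃ lam : ℝ, 0 < lam ∧
      (Fin.snoc ((1 / 2 : ℝ) • (x + y)) (dot (x - y) v - lam) : Vec (n + 1)) ∈ Pphi P v

/-- The set `(A + B)/2`. -/
def avgSet {n : ℕ} (A B : Set (Vec n)) : Set (Vec n) :=
  {z | ∃ x ∈ A, ∃ y ∈ B, z = (1 / 2 : ℝ) • (x + y)}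

/-- The coherent subdivision `π(F^φ)` is tight. -/
def TightSub {n : ℕ} (P : Set (Vec n)) (v : Vec n) : Prop :=
  ∀ F G : Set (Vec n), IsFace P F → IsFace P G → F.Nonempty → G.Nonempty →
    InFphi P v F G → sdim F + sdim G = sdim (avgSet F G)

/-- `d` is a direction of an edge of `P ∩ ρ_z P` for some `z ∈ P`; the hyperplanes of the
fundamental hyperplane arrangement `H_P` are the orthogonal complements of such directions. -/
def EdgeDir {n : ℕ} (P : Set (Vec n)) (d : Vec n) : Prop :=
  d ≠ 0 ∧ ∃ z ∈ P, ∃ E, IsEdge (P ∩ reflP z P) E ∧ d ∈ (affineSpan ℝ E).direction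

/-- The cone `cone(-N_P(F) ∪ N_P(G))`. -/
def diagCone {n : ℕ} (P F G : Set (Vec n)) : Set (Vec n) :=
  coneOf ((Neg.neg '' normalCone P F) ∪ normalCone P G)


/-- A planar rooted tree with `n` internal vertices labelled `0, …, n-1` in the clockwise-from-root
(depth-first preorder) order; `parent v` is the parent of the vertex `v`, the root being vertex `0`.
The internal edge `e : Fin (n-1)` connects the vertex `e+1` to its parent. -/
structure PTree (n : ℕ) where
  parent : Fin n → Fin n
  parent_zero : ∀ v : Fin n, v.val = 0 → parent v = v
  parent_lt : ∀ v : Fin n, 0 < v.val → (parent v).val < v.val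
  preorder : ∀ v w : Fin n, w.val = v.val + 1 → ∃ k : ℕ, parent^[k] v = parent w

/-- The child endpoint of the edge `e`: the vertex labelled `e + 1`. -/
def childV {n : ℕ} (e : Fin (n - 1)) : Fin n :=
  ⟨e.val + 1, by have h := e.isLt; omega⟩

/-- The vertices of the closure of a set of edges `N`, i.e. `V(t(N))`. -/
def nestVtx {n : ℕ} (t : PTree n) (N : Finset (Fin (n - 1))) : Finset (Fin n) :=
  N.biUnion fun e => {childV e, t.parent (childV e)}

/-- Two distinct edges are adjacent when they share a vertex. -/
def edgeAdj {n : ℕ} (t : PTree n) (e f : Fin (n - 1)) : Prop :=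
  e ≠ f ∧ (({childV e, t.parent (childV e)} ∩ {childV f, t.parent (childV f)} :
      Finset (Fin n))).Nonempty

instance {n : ℕ} (t : PTree n) (e f : Fin (n - 1)) : Decidable (edgeAdj t e f) := by
  unfold edgeAdj; infer_instance

/-- A nest: a set of edges whose closure is a connected subgraph (the trivial nest `E(t)` is
also allowed when `n = 1`, where it is empty). -/
def IsNest {n : ℕ} (t : PTree n) (N : Finset (Fin (n - 1))) : Prop :=
  (N.Nonempty ∨ N = Finset.univ) ∧
    ∀ e ∈ N, ∀ f ∈ N,
      Relation.ReflTransGen (fun a b => a ∈ N ∧ b ∈ N ∧ edgeAdj t a b) e f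

/-- A nesting: a set of nests containing the trivial nest, any two of which are nested or
disjoint, disjoint ones having no adjacent edges. -/
def IsNesting {n : ℕ} (t : PTree n) (𝒩 : Finset (Finset (Fin (n - 1)))) : Prop :=
  (∀ N ∈ 𝒩, IsNest t N) ∧ Finset.univ ∈ 𝒩 ∧
    ∀ N ∈ 𝒩, ∀ M ∈ 𝒩,
      N ⊆ M ∨ M ⊆ N ∨ (Disjoint N M ∧ ∀ e ∈ N, ∀ f ∈ M, ¬ edgeAdj t e f)

/-- A maximal nesting: a nesting of (maximal) cardinality `n - 1`. -/
def IsMaxNesting {n : ℕ} (t : PTree n) (𝒩 : Finset (Finset (Fin (n - 1)))) : Prop :=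
  IsNesting t 𝒩 ∧ 𝒩.card = n - 1

/-- `min 𝒩(i)`: the smallest nest of `𝒩` containing the edge `i` (the nests of a nesting
containing `i` being totally ordered, this is their intersection). -/
def minNest {n : ℕ} (𝒩 : Finset (Finset (Fin (n - 1)))) (i : Fin (n - 1)) :
    Finset (Fin (n - 1)) :=
  (𝒩.filter fun N => i ∈ N).inf id

/-- `u` is a weak ancestor of `w` (any ancestor is reached in at most `n` steps). -/
def isAnc {n : ℕ} (t : PTree n) (u w : Fin n) : Prop :=
  ∃ k ∈ Finset.range (n + 1), t.parent^[k] w = u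

instance {n : ℕ} (t : PTree n) (u w : Fin n) : Decidable (isAnc t u w) := by
  unfold isAnc; infer_instance

/-- `α_i`: the total weight of the subtree `t₁` of `t(min𝒩(i))` having the edge `i` as root. -/
def alphaN {n : ℕ} (t : PTree n) (𝒩 : Finset (Finset (Fin (n - 1))))
    (ω : Fin n → ℤ) (i : Fin (n - 1)) : ℤ :=
  ∑ w ∈ (nestVtx t (minNest 𝒩 i)).filter (fun w => isAnc t (childV i) w), ω w

/-- `β_i`: the total weight of the subtree `t₂` of `t(min𝒩(i))` having the edge `i` as a leaf. -/
def betaN {n : ℕ} (t : PTree n) (𝒩 : Finset (Finset (Fin (n - 1))))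
    (ω : Fin n → ℤ) (i : Fin (n - 1)) : ℤ :=
  ∑ w ∈ (nestVtx t (minNest 𝒩 i)).filter (fun w => ¬ isAnc t (childV i) w), ω w

/-- The point `M(t, 𝒩, ω) = (α₁β₁, …, α_{n-1}β_{n-1})`. -/
noncomputable def MPoint {n : ℕ} (t : PTree n) (𝒩 : Finset (Finset (Fin (n - 1))))
    (ω : Fin n → ℤ) : Vec (n - 1) :=
  fun i => ((alphaN t 𝒩 ω i : ℤ) : ℝ) * ((betaN t 𝒩 ω i : ℤ) : ℝ)

/-- The Loday realization `P_{(t,ω)}` of the operahedron. -/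
noncomputable def Loday {n : ℕ} (t : PTree n) (ω : Fin n → ℤ) : Set (Vec (n - 1)) :=
  convexHull ℝ {x | ∃ 𝒩, IsMaxNesting t 𝒩 ∧ x = MPoint t 𝒩 ω}

/-- The face of `P_{(t,ω)}` associated to a nesting `𝒩`: the convex hull of the points
`M(t,𝒩',ω)` over the maximal nestings `𝒩' ⊇ 𝒩`. -/
noncomputable def faceOfNesting {n : ℕ} (t : PTree n) (ω : Fin n → ℤ)
    (𝒩 : Finset (Finset (Fin (n - 1)))) : Set (Vec (n - 1)) :=
  convexHull ℝ {x | ∃ 𝒩', IsMaxNesting t 𝒩' ∧ 𝒩 ⊆ 𝒩' ∧ x = MPoint t 𝒩' ω}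

/-- A pair `(I, J) ∈ D(m)`: disjoint subsets of the same cardinality with `min (I ∪ J) ∈ I`. -/
def DPair {m : ℕ} (I J : Finset (Fin m)) : Prop :=
  I.card = J.card ∧ Disjoint I J ∧ ∃ i ∈ I, ∀ x ∈ I ∪ J, i ≤ x

/-- A trinary vector: all coordinates are `0`, `1` or `-1`. -/
def Trinary {m : ℕ} (u : Vec m) : Prop := ∀ i, u i = 0 ∨ u i = 1 ∨ u i = -1

/-- A balanced vector: same number of coordinates equal to `1` and to `-1`. -/
def BalancedVec {m : ℕ} (u : Vec m) : Prop :=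
  (Finset.univ.filter fun i => u i = 1).card = (Finset.univ.filter fun i => u i = -1).card

/-- The first nonzero coordinate is `1`. -/
def FirstPos {m : ℕ} (u : Vec m) : Prop :=
  ∀ i, u i ≠ 0 → (∀ j, j < i → u j = 0) → u i = 1
namespace S18
open Finset Relation

variable {n : ℕ} (t : PTree n)

def ancU (u w : Fin n) : Prop := ∃ k, t.parent^[k] w = u

variable {t}

lemma parent_val_le (v : Fin n) : (t.parent v).val ≤ v.val := by
  rcases Nat.eq_zero_or_pos v.val with h | h
  · rw [t.parent_zero v h]
  · exact le_of_lt (t.parent_lt v h)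

lemma iter_val_le (k : ℕ) (v : Fin n) : (t.parent^[k] v).val ≤ v.val := by
  induction k with
  | zero => simp
  | succ k ih =>
      rw [Function.iterate_succ_apply']
      exact le_trans (parent_val_le _) ih

lemma ancU_refl (u : Fin n) : ancU t u u := ⟨0, rfl⟩

lemma ancU_val_le {u w : Fin n} (h : ancU t u w) : u.val ≤ w.val := by
  obtain ⟨k, hk⟩ := h
  have h2 := iter_val_le (t := t) k w
  rw [hk] at h2
  exact h2

lemma ancU_trans {u v w : Fin n} (h1 : ancU t u v) (h2 : ancU t v w) : ancU t u w := by
  obtain ⟨a, ha⟩ := h1; obtain ⟨b, hb⟩ := h2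
  exact ⟨a + b, by rw [Function.iterate_add_apply, hb, ha]⟩

lemma ancU_antisymm {u w : Fin n} (h1 : ancU t u w) (h2 : ancU t w u) : u = w :=
  Fin.ext (le_antisymm (ancU_val_le h1) (ancU_val_le h2))

lemma ancU_parent (w : Fin n) : ancU t (t.parent w) w := ⟨1, rfl⟩

lemma ancU_of_parent {u w : Fin n} (h : ancU t u (t.parent w)) : ancU t u w := by
  obtain ⟨k, hk⟩ := h
  exact ⟨k + 1, by rw [Function.iterate_succ_apply]; exact hk⟩

lemma ancU_step {u w : Fin n} (h : ancU t u w) (hne : u ≠ w) : ancU t u (t.parent w) := by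
  obtain ⟨k, hk⟩ := h
  cases k with
  | zero => exact absurd hk.symm hne
  | succ k => exact ⟨k, by rw [Function.iterate_succ_apply] at hk; exact hk⟩

lemma fixpt_zero {v : Fin n} (h : v.val = 0) (m : ℕ) : t.parent^[m] v = v := by
  induction m with
  | zero => rfl
  | succ m ih => rw [Function.iterate_succ_apply, t.parent_zero v h, ih]

lemma iter_val_zero : ∀ (c : ℕ) (v : Fin n), v.val ≤ c → (t.parent^[c] v).val = 0 := by
  intro c
  induction c with
  | zero => intro v hv; simpa using hv
  | succ c ih =>
      intro v hv
      rcases Nat.eq_zero_or_pos v.val with h | h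
      · rw [fixpt_zero h]; exact h
      · rw [Function.iterate_succ_apply]
        exact ih _ (by have := t.parent_lt v h; omega)

lemma isAnc_iff_ancU {u w : Fin n} : isAnc t u w ↔ ancU t u w := by
  constructor
  · rintro ⟨k, -, hk⟩; exact ⟨k, hk⟩
  · rintro ⟨k, hk⟩
    by_cases hkn : k ≤ n
    · exact ⟨k, by simpa using Nat.lt_succ_of_le hkn, hk⟩
    · push_neg at hkn
      have hw : w.val ≤ n := le_of_lt w.isLt
      have h1 : (t.parent^[w.val] w).val = 0 := iter_val_zero w.val w le_rfl
      have h2 : (t.parent^[k] w).val = 0 := by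
        have : k = w.val + (k - w.val) := by omega
        rw [this, Nat.add_comm, Function.iterate_add_apply]
        exact (by rw [fixpt_zero h1 (k - w.val)]; exact h1 :
          (t.parent^[k - w.val] (t.parent^[w.val] w)).val = 0)
      refine ⟨w.val, by simpa using Nat.lt_succ_of_le hw, ?_⟩
      rw [← hk]
      exact Fin.ext (by rw [h1, h2])


def edgeAdj {n : ℕ} (t : PTree n) (e f : Fin (n - 1)) : Prop :=
  e ≠ f ∧ (({childV e, t.parent (childV e)} ∩ {childV f, t.parent (childV f)} :
      Finset (Fin n))).Nonempty


lemma childV_val {e : Fin (n-1)} : (childV e : Fin n).val = e.val + 1 := rfl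

lemma childV_pos (e : Fin (n-1)) : 0 < (childV e : Fin n).val := Nat.succ_pos _

lemma childV_injective : Function.Injective (childV (n := n)) := by
  intro a b h
  have : a.val + 1 = b.val + 1 := congrArg Fin.val h
  exact Fin.ext (Nat.succ_injective this)

def edgeTo (u : Fin n) (h : 0 < u.val) : Fin (n - 1) :=
  ⟨u.val - 1, by have := u.isLt; omega⟩

lemma childV_edgeTo {u : Fin n} (h : 0 < u.val) : childV (edgeTo u h) = u := by
  apply Fin.ext
  show (u.val - 1) + 1 = u.val
  omega

lemma eq_edgeTo_of_childV {u : Fin n} (h : 0 < u.val) {i : Fin (n-1)}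
    (hi : childV i = u) : i = edgeTo u h := by
  apply childV_injective
  rw [hi, childV_edgeTo]

lemma edgeAdj_symm {e f : Fin (n-1)} (h : edgeAdj t e f) : edgeAdj t f e := by
  obtain ⟨hne, v, hv⟩ := h
  rw [Finset.mem_inter] at hv
  exact ⟨hne.symm, v, Finset.mem_inter.2 ⟨hv.2, hv.1⟩⟩

lemma edgeAdj_of_endpoints {e f : Fin (n-1)} (hne : e ≠ f) {v : Fin n}
    (h1 : v = childV e ∨ v = t.parent (childV e))
    (h2 : v = childV f ∨ v = t.parent (childV f)) : edgeAdj t e f := by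
  refine ⟨hne, v, Finset.mem_inter.2 ⟨?_, ?_⟩⟩ <;>
    simp only [Finset.mem_insert, Finset.mem_singleton] <;> tauto

open scoped Classical in
noncomputable def pathE (t : PTree n) (u w : Fin n) : Finset (Fin (n - 1)) :=
  Finset.univ.filter (fun i => Xor' (ancU t (childV i) u) (ancU t (childV i) w))

lemma mem_pathE {u w : Fin n} {i : Fin (n-1)} :
    i ∈ pathE t u w ↔ Xor' (ancU t (childV i) u) (ancU t (childV i) w) := by
  classical
  simp [pathE]

lemma pathE_symm (u w : Fin n) : pathE t u w = pathE t w u := by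
  ext i
  rw [mem_pathE, mem_pathE]
  unfold Xor'
  unfold Xor
  tauto

lemma pathE_self (u : Fin n) : pathE t u u = ∅ := by
  ext i
  rw [mem_pathE]
  simp [Xor']

lemma not_ancU_of_val_lt {u w : Fin n} (h : w.val < u.val) : ¬ ancU t u w :=
  fun hc => absurd (ancU_val_le hc) (by omega)

lemma pathE_peel {u w : Fin n} (h : w.val < u.val) :
    pathE t u w = insert (edgeTo u (lt_of_le_of_lt (Nat.zero_le _) h))
      (pathE t (t.parent u) w) ∧
    edgeTo u (lt_of_le_of_lt (Nat.zero_le _) h) ∉ pathE t (t.parent u) w := by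
  have hu : 0 < u.val := lt_of_le_of_lt (Nat.zero_le _) h
  have hnw : ¬ ancU t u w := not_ancU_of_val_lt h
  have hnpu : ¬ ancU t u (t.parent u) := by
    apply not_ancU_of_val_lt
    exact t.parent_lt u hu
  constructor
  · ext i
    rw [mem_pathE, Finset.mem_insert, mem_pathE]
    by_cases hi : i = edgeTo u hu
    · subst hi
      rw [childV_edgeTo]
      simp only [true_or, iff_true]
      exact Or.inl ⟨ancU_refl u, hnw⟩
    · have hci : childV i ≠ u := fun hc => hi (eq_edgeTo_of_childV hu hc)
      have key : ancU t (childV i) u ↔ ancU t (childV i) (t.parent u) :=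
        ⟨fun ha => ancU_step ha hci, fun ha => ancU_of_parent ha⟩
      rw [key]
      simp only [hi, false_or]
  · rw [mem_pathE, childV_edgeTo]
    intro hc
    rcases hc with ⟨h1, -⟩ | ⟨h1, -⟩
    · exact hnpu h1
    · exact hnw h1


def pconn (t : PTree n) (u w : Fin n) : Prop :=
  (∃ i ∈ pathE t u w, u = childV i ∨ u = t.parent (childV i)) ∧
  (∃ i ∈ pathE t u w, w = childV i ∨ w = t.parent (childV i)) ∧
  (∀ a ∈ pathE t u w, ∀ b ∈ pathE t u w,
    ReflTransGen (fun x y => x ∈ pathE t u w ∧ y ∈ pathE t u w ∧ edgeAdj t x y) a b)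

lemma pconn_symm {u w : Fin n} (h : pconn t u w) : pconn t w u := by
  obtain ⟨h1, h2, h3⟩ := h
  refine ⟨?_, ?_, ?_⟩ <;> rw [pathE_symm (t := t) w u] <;> assumption

lemma pconn_of_ne : ∀ (m : ℕ) (u w : Fin n), u.val + w.val < m → u ≠ w → pconn t u w := by
  intro m
  induction m with
  | zero => intro u w h _; omega
  | succ m IH =>
    have key : ∀ u w : Fin n, u.val + w.val < m + 1 → w.val < u.val → pconn t u w := by
      intro u w hsum hlt
      have hu : 0 < u.val := lt_of_le_of_lt (Nat.zero_le _) hlt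
      obtain ⟨hpeel, hnotmem⟩ := pathE_peel (t := t) hlt
      set i0 : Fin (n-1) := edgeTo u (lt_of_le_of_lt (Nat.zero_le _) hlt) with hi0
      have hcv : childV i0 = u := childV_edgeTo _
      have hi0mem : i0 ∈ pathE t u w := by rw [hpeel]; exact Finset.mem_insert_self _ _
      by_cases hw : t.parent u = w
      · have hempty : pathE t (t.parent u) w = ∅ := by rw [hw, pathE_self]
        rw [hempty] at hpeel
        have hsingle : pathE t u w = {i0} := by rw [hpeel]; rfl
        refine ⟨⟨i0, hi0mem, Or.inl hcv.symm⟩,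
                ⟨i0, hi0mem, Or.inr (by rw [hcv, hw])⟩, ?_⟩
        intro a ha b hb
        rw [hsingle, Finset.mem_singleton] at ha hb
        rw [ha, hb]
      · have hsum' : (t.parent u).val + w.val < m := by
          have := t.parent_lt u hu; omega
        obtain ⟨⟨e1, he1, he1'⟩, ⟨e2, he2, he2'⟩, hconn⟩ := IH (t.parent u) w hsum' hw
        have hsub : pathE t (t.parent u) w ⊆ pathE t u w := by
          rw [hpeel]; exact Finset.subset_insert _ _
        have hne1 : i0 ≠ e1 := fun hc => hnotmem (hc ▸ he1)
        have hadj : edgeAdj t i0 e1 :=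
          edgeAdj_of_endpoints hne1 (v := t.parent u)
            (Or.inr (by rw [hcv])) he1'
        -- lift connectivity from the smaller path
        have hlift : ∀ a ∈ pathE t (t.parent u) w, ∀ b ∈ pathE t (t.parent u) w,
            ReflTransGen (fun x y => x ∈ pathE t u w ∧ y ∈ pathE t u w ∧ edgeAdj t x y) a b := by
          intro a ha b hb
          refine ReflTransGen.mono ?_ a b (hconn a ha b hb)
          rintro x y ⟨hx, hy, hxy⟩
          exact ⟨hsub hx, hsub hy, hxy⟩
        refine ⟨⟨i0, hi0mem, Or.inl hcv.symm⟩, ⟨e2, hsub he2, he2'⟩, ?_⟩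
        intro a ha b hb
        rw [hpeel, Finset.mem_insert] at ha hb
        rcases ha with ha | ha <;> rcases hb with hb | hb
        · rw [ha, hb]
        · subst ha
          refine ReflTransGen.head ⟨hi0mem, hsub he1, hadj⟩ (hlift e1 he1 b hb)
        · subst hb
          refine ReflTransGen.tail (hlift a ha e1 he1) ⟨hsub he1, hi0mem, edgeAdj_symm hadj⟩
        · exact hlift a ha b hb
    intro u w hsum hne
    rcases lt_trichotomy u.val w.val with h | h | h
    · exact pconn_symm (key w u (by omega) h)
    · exact absurd (Fin.ext h) hne
    · exact key u w hsum h



lemma mem_nestVtx {N : Finset (Fin (n-1))} {v : Fin n} :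
    v ∈ nestVtx t N ↔ ∃ e ∈ N, v = childV e ∨ v = t.parent (childV e) := by
  simp [nestVtx, Finset.mem_biUnion]

lemma childV_mem_nestVtx {N : Finset (Fin (n-1))} {e : Fin (n-1)} (he : e ∈ N) :
    childV e ∈ nestVtx t N := mem_nestVtx.2 ⟨e, he, Or.inl rfl⟩

lemma parent_childV_mem_nestVtx {N : Finset (Fin (n-1))} {e : Fin (n-1)} (he : e ∈ N) :
    t.parent (childV e) ∈ nestVtx t N := mem_nestVtx.2 ⟨e, he, Or.inr rfl⟩

lemma nestVtx_mono {N M : Finset (Fin (n-1))} (h : N ⊆ M) :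
    nestVtx t N ⊆ nestVtx t M := by
  intro v hv
  obtain ⟨e, he, hor⟩ := mem_nestVtx.1 hv
  exact mem_nestVtx.2 ⟨e, h he, hor⟩

lemma ancU_adj_step {u : Fin n} {b c : Fin (n-1)}
    (h1 : ancU t u (childV b)) (h2 : u ≠ childV b) (hadj : edgeAdj t b c) :
    ancU t u (childV c) := by
  obtain ⟨-, v, hv⟩ := hadj
  rw [Finset.mem_inter] at hv
  obtain ⟨hv1, hv2⟩ := hv
  simp only [Finset.mem_insert, Finset.mem_singleton] at hv1 hv2
  have hpb : ancU t u (t.parent (childV b)) := ancU_step h1 h2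
  rcases hv1 with hb | hb <;> rcases hv2 with hc | hc
  · rw [← hc, hb]; exact h1
  · exact ancU_of_parent (by rw [← hc, hb]; exact h1)
  · rw [← hc, hb]; exact hpb
  · exact ancU_of_parent (by rw [← hc, hb]; exact hpb)

/-- A vertex of the closure of a connected nest which is not the child endpoint of any of its
edges is a strict ancestor of every child endpoint. -/
lemma nonchild_anc {N : Finset (Fin (n-1))} (hN : IsNest t N) {u : Fin n}
    (hu : u ∈ nestVtx t N) (hnc : ∀ f ∈ N, childV f ≠ u) :
    ∀ f ∈ N, ancU t u (childV f) ∧ u ≠ childV f := by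
  obtain ⟨f0, hf0, hor⟩ := mem_nestVtx.1 hu
  have hstart : ancU t u (childV f0) ∧ u ≠ childV f0 := by
    rcases hor with h | h
    · exact absurd h.symm (hnc f0 hf0)
    · exact ⟨h ▸ ancU_parent _, fun hc => hnc f0 hf0 hc.symm⟩
  intro f hf
  have hpath := hN.2 f0 hf0 f hf
  induction hpath with
  | refl => exact hstart
  | tail hab hstep ih =>
      obtain ⟨hb, hc, hadj⟩ := hstep
      have ihb := ih hb
      exact ⟨ancU_adj_step ihb.1 ihb.2 hadj, fun hcc => hnc _ hc hcc.symm⟩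

lemma nonchild_unique {N : Finset (Fin (n-1))} (hN : IsNest t N) {u v : Fin n}
    (hu : u ∈ nestVtx t N) (hncu : ∀ f ∈ N, childV f ≠ u)
    (hv : v ∈ nestVtx t N) (hncv : ∀ f ∈ N, childV f ≠ v) : u = v := by
  obtain ⟨f0, hf0, hor⟩ := mem_nestVtx.1 hu
  have hu' : u = t.parent (childV f0) := by
    rcases hor with h | h
    · exact absurd h.symm (hncu f0 hf0)
    · exact h
  obtain ⟨g0, hg0, horv⟩ := mem_nestVtx.1 hv
  have hv' : v = t.parent (childV g0) := by
    rcases horv with h | h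
    · exact absurd h.symm (hncv g0 hg0)
    · exact h
  have h1 := nonchild_anc hN hu hncu g0 hg0
  have h2 := nonchild_anc hN hv hncv f0 hf0
  -- u strict anc of childV g0, v = parent (childV g0) so ancU v u? no: ancU u v:
  have hanc1 : ancU t u v := by
    rw [hv']
    exact ancU_step h1.1 h1.2
  have hanc2 : ancU t v u := by
    rw [hu']
    exact ancU_step h2.1 h2.2
  exact ancU_antisymm hanc1 hanc2

/-- The tree path between two closure vertices of a nest is contained in the nest. -/
lemma pathE_subset_nest :
    ∀ (m : ℕ) (N : Finset (Fin (n-1))) (u w : Fin n), u.val + w.val < m →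
      IsNest t N → u ∈ nestVtx t N → w ∈ nestVtx t N → pathE t u w ⊆ N := by
  intro m
  induction m with
  | zero => intro N u w h; omega
  | succ m IH =>
    have key : ∀ (N : Finset (Fin (n-1))) (u w : Fin n), u.val + w.val < m + 1 →
        w.val < u.val → IsNest t N → u ∈ nestVtx t N → w ∈ nestVtx t N →
        pathE t u w ⊆ N := by
      intro N u w hsum hlt hN hu hw
      have hu0 : 0 < u.val := lt_of_le_of_lt (Nat.zero_le _) hlt
      -- u must be the child endpoint of an edge of N
      have hchild : ∃ f ∈ N, childV f = u := by
        by_contra hnc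
        push_neg at hnc
        obtain ⟨g, hg, horw⟩ := mem_nestVtx.1 hw
        rcases horw with h | h
        · -- w = childV g, but u is strict ancestor of childV g : contradiction with vals
          have := (nonchild_anc hN hu hnc g hg).1
          have := ancU_val_le this
          rw [← h] at this
          omega
        · -- w is also a non-child vertex, hence w = u
          have hncw : ∀ f ∈ N, childV f ≠ w := by
            intro f hf hc
            have := (nonchild_anc hN hu hnc f hf)
            rw [hc] at this
            have := ancU_val_le this.1
            omega
          have := nonchild_unique hN hu hnc hw hncw
          omega
      obtain ⟨f, hf, hfu⟩ := hchild
      obtain ⟨hpeel, -⟩ := pathE_peel (t := t) hlt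
      rw [hpeel]
      have hfe : f = edgeTo u hu0 := eq_edgeTo_of_childV hu0 hfu
      have hins : edgeTo u (lt_of_le_of_lt (Nat.zero_le _) hlt) ∈ N := by
        rw [← hfe]; exact hf
      have hpu : t.parent u ∈ nestVtx t N := by
        rw [← hfu]
        exact parent_childV_mem_nestVtx hf
      have hsum' : (t.parent u).val + w.val < m := by
        have := t.parent_lt u hu0; omega
      exact Finset.insert_subset hins (IH N (t.parent u) w hsum' hN hpu hw)
    intro N u w hsum hN hu hw
    rcases lt_trichotomy u.val w.val with h | h | h
    · rw [pathE_symm]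
      exact key N w u (by omega) h hN hw hu
    · have : u = w := Fin.ext h
      rw [this, pathE_self]
      exact Finset.empty_subset N
    · exact key N u w hsum h hN hu hw


variable {𝒩 : Finset (Finset (Fin (n - 1)))}

lemma nests_comparable (h : IsNesting t 𝒩) {N M : Finset (Fin (n-1))}
    (hN : N ∈ 𝒩) (hM : M ∈ 𝒩) {e : Fin (n-1)} (heN : e ∈ N) (heM : e ∈ M) :
    N ⊆ M ∨ M ⊆ N := by
  rcases h.2.2 N hN M hM with h1 | h1 | h1
  · exact Or.inl h1
  · exact Or.inr h1
  · exact absurd (h1.1.forall_ne_finset heN heM) (by simp)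

lemma nests_comparable_of_adj (h : IsNesting t 𝒩) {N M : Finset (Fin (n-1))}
    (hN : N ∈ 𝒩) (hM : M ∈ 𝒩) {e f : Fin (n-1)} (heN : e ∈ N) (hfM : f ∈ M)
    (hadj : edgeAdj t e f) : N ⊆ M ∨ M ⊆ N := by
  rcases h.2.2 N hN M hM with h1 | h1 | h1
  · exact Or.inl h1
  · exact Or.inr h1
  · exact absurd hadj (h1.2 e heN f hfM)

lemma nest_nonempty (hn : 2 ≤ n) {N : Finset (Fin (n-1))} (hN : IsNest t N) :
    N.Nonempty := by
  rcases hN.1 with h | h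
  · exact h
  · rw [h]
    have : Nonempty (Fin (n-1)) := ⟨⟨0, by omega⟩⟩
    exact Finset.univ_nonempty

lemma minNest_spec (h : IsNesting t 𝒩) (i : Fin (n-1)) :
    minNest 𝒩 i ∈ 𝒩 ∧ i ∈ minNest 𝒩 i ∧ ∀ P ∈ 𝒩, i ∈ P → minNest 𝒩 i ⊆ P := by
  classical
  set F := 𝒩.filter (fun N => i ∈ N) with hF
  have hFne : F.Nonempty := ⟨Finset.univ, by
    rw [hF, Finset.mem_filter]
    exact ⟨h.2.1, Finset.mem_univ i⟩⟩
  obtain ⟨M0, hM0F, hM0min⟩ : ∃ M0 ∈ F, ∀ P ∈ F, ¬ P < M0 := by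
    obtain ⟨m, hm⟩ := Finset.exists_minimal hFne
    exact ⟨m, hm.1, fun P hP h => h.not_ge (hm.2 hP h.le)⟩
  have hM0 : M0 ∈ 𝒩 ∧ i ∈ M0 := by
    rw [hF, Finset.mem_filter] at hM0F; exact hM0F
  have hle : ∀ P ∈ F, M0 ⊆ P := by
    intro P hPF
    have hP := hPF
    rw [hF, Finset.mem_filter] at hP
    rcases nests_comparable h hM0.1 hP.1 hM0.2 hP.2 with h1 | h1
    · exact h1
    · rcases (Finset.le_iff_subset.2 h1).lt_or_eq with h2 | h2
      · exact absurd h2 (hM0min P hPF)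
      · exact h2.ge
  have : minNest 𝒩 i = M0 := by
    apply le_antisymm
    · exact Finset.inf_le hM0F
    · exact Finset.le_inf fun P hP => hle P hP
  rw [this]
  exact ⟨hM0.1, hM0.2, fun P hP hiP => hle P (by rw [hF, Finset.mem_filter]; exact ⟨hP, hiP⟩)⟩

lemma minNest_eq_of (h : IsNesting t 𝒩) {i : Fin (n-1)} {M : Finset (Fin (n-1))}
    (hM : M ∈ 𝒩) (hiM : i ∈ M) (hmin : ∀ P ∈ 𝒩, i ∈ P → M ⊆ P) :
    minNest 𝒩 i = M := by
  obtain ⟨h1, h2, h3⟩ := minNest_spec h i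
  exact le_antisymm (h3 M hM hiM) (hmin _ h1 h2)

lemma rtg_switch {α : Type*} {R : α → α → Prop} {C : α → Prop} {a b : α}
    (h : Relation.ReflTransGen R a b) (ha : C a) (hb : ¬ C b) :
    ∃ x y, R x y ∧ C x ∧ ¬ C y := by
  induction h with
  | refl => exact absurd ha hb
  | @tail b' c' hab hstep ih =>
      by_cases hc : C b'
      · exact ⟨b', c', hstep, hc, hb⟩
      · exact ih hc

/-- Every nest of a nesting has a private edge. -/
lemma exists_private_edge (hn : 2 ≤ n) (h : IsNesting t 𝒩)
    {M : Finset (Fin (n-1))} (hM : M ∈ 𝒩) :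
    ∃ e ∈ M, ∀ P ∈ 𝒩, e ∈ P → M ⊆ P := by
  by_contra hcon
  push_neg at hcon
  have hcon' : ∀ e ∈ M, ∃ P ∈ 𝒩, e ∈ P ∧ P ⊂ M := by
    intro e he
    obtain ⟨P, hP, heP, hMP⟩ := hcon e he
    refine ⟨P, hP, heP, ?_⟩
    rcases nests_comparable h hM hP he heP with h1 | h1
    · exact absurd h1 hMP
    · exact lt_of_le_of_ne h1 (fun hc => hMP (le_of_eq hc.symm))
  obtain ⟨e0, he0⟩ := nest_nonempty hn (h.1 M hM)
  obtain ⟨P0, hP0, heP0, hP0M⟩ := hcon' e0 he0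
  classical
  set T := 𝒩.filter (fun Q => P0 ⊆ Q ∧ Q ⊂ M) with hT
  have hTne : T.Nonempty := ⟨P0, by rw [hT, Finset.mem_filter]; exact ⟨hP0, le_rfl, hP0M⟩⟩
  obtain ⟨C, hCT, hCmax⟩ : ∃ C ∈ T, ∀ P ∈ T, ¬ C < P := by
    obtain ⟨m, hm⟩ := Finset.exists_maximal hTne
    exact ⟨m, hm.1, fun P hP h => h.not_ge (hm.2 hP h.le)⟩
  rw [hT, Finset.mem_filter] at hCT
  obtain ⟨hC𝒩, hP0C, hCM⟩ := hCT
  obtain ⟨f, hfM, hfC⟩ := Finset.exists_of_ssubset hCM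
  have he0C : e0 ∈ C := hP0C heP0
  obtain ⟨x, y, ⟨hxM, hyM, hxy⟩, hxC, hyC⟩ :=
    rtg_switch (C := fun z => z ∈ C) ((h.1 M hM).2 e0 he0 f hfM) he0C hfC
  obtain ⟨Py, hPy, hyPy, hPyM⟩ := hcon' y hyM
  rcases nests_comparable_of_adj h hC𝒩 hPy hxC hyPy hxy with h1 | h1
  · -- C ⊆ Py
    have hPyT : Py ∈ T := by
      rw [hT, Finset.mem_filter]
      exact ⟨hPy, hP0C.trans h1, hPyM⟩
    rcases (Finset.le_iff_subset.2 h1).lt_or_eq with h2 | h2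
    · exact hCmax Py hPyT h2
    · exact hyC (h2 ▸ hyPy)
  · exact hyC (h1 hyPy)

lemma minNest_surj (hn : 2 ≤ n) (h : IsNesting t 𝒩) {M : Finset (Fin (n-1))}
    (hM : M ∈ 𝒩) : ∃ e, minNest 𝒩 e = M := by
  obtain ⟨e, heM, hmin⟩ := exists_private_edge hn h hM
  exact ⟨e, minNest_eq_of h hM heM hmin⟩

lemma minNest_injective (hn : 2 ≤ n) (h : IsMaxNesting t 𝒩) :
    Function.Injective (minNest 𝒩) := by
  classical
  have himg : Finset.univ.image (minNest 𝒩) = 𝒩 := by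
    apply Finset.Subset.antisymm
    · intro M hMi
      obtain ⟨e, -, he⟩ := Finset.mem_image.1 hMi
      rw [← he]
      exact (minNest_spec h.1 e).1
    · intro M hM
      obtain ⟨e, he⟩ := minNest_surj hn h.1 hM
      exact Finset.mem_image.2 ⟨e, Finset.mem_univ e, he⟩
  have hcard : (Finset.univ.image (minNest 𝒩)).card = (Finset.univ : Finset (Fin (n-1))).card := by
    rw [himg, h.2, Finset.card_univ]
    simp
  have hinj : Set.InjOn (minNest 𝒩) ((Finset.univ : Finset (Fin (n-1))) : Set (Fin (n-1))) :=
    Finset.injOn_of_card_image_eq hcard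
  intro a b hab
  exact hinj (Finset.mem_coe.2 (Finset.mem_univ a)) (Finset.mem_coe.2 (Finset.mem_univ b)) hab


lemma isAnc_refl (u : Fin n) : isAnc t u u := isAnc_iff_ancU.2 (ancU_refl u)

lemma nestVtx_exists_new {N K : Finset (Fin (n-1))} (hNnest : IsNest t N) (hNK : N ⊂ K) :
    ∃ z ∈ nestVtx t K, z ∉ nestVtx t N := by
  obtain ⟨e, heK, heN⟩ := Finset.exists_of_ssubset hNK
  by_cases hcv : childV e ∈ nestVtx t N
  · have hnc : ∀ f ∈ N, childV f ≠ childV e := by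
      intro f hf hc
      exact heN ((childV_injective hc) ▸ hf)
    refine ⟨t.parent (childV e), parent_childV_mem_nestVtx heK, ?_⟩
    intro hz
    have hvalz : (t.parent (childV e)).val < (childV e).val :=
      t.parent_lt _ (childV_pos e)
    by_cases hzc : ∃ g ∈ N, childV g = t.parent (childV e)
    · obtain ⟨g, hg, hgz⟩ := hzc
      have := ancU_val_le (nonchild_anc hNnest hcv hnc g hg).1
      rw [hgz] at this
      omega
    · push_neg at hzc
      have := nonchild_unique hNnest hcv hnc hz hzc
      rw [← this] at hvalz
      omega
  · exact ⟨childV e, childV_mem_nestVtx heK, hcv⟩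

def aP (t : PTree n) (P : Finset (Fin (n-1))) (ω : Fin n → ℤ) (i : Fin (n-1)) : ℤ :=
  ∑ w ∈ (nestVtx t P).filter (fun w => isAnc t (childV i) w), ω w

def bP (t : PTree n) (P : Finset (Fin (n-1))) (ω : Fin n → ℤ) (i : Fin (n-1)) : ℤ :=
  ∑ w ∈ (nestVtx t P).filter (fun w => ¬ isAnc t (childV i) w), ω w

variable {ω : Fin n → ℤ} (hω : ∀ u, 0 < ω u)

include hω

lemma aP_pos {P : Finset (Fin (n-1))} {i : Fin (n-1)} (hi : i ∈ P) :
    0 < aP t P ω i := by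
  apply Finset.sum_pos (fun w _ => hω w)
  exact ⟨childV i, Finset.mem_filter.2 ⟨childV_mem_nestVtx hi, isAnc_refl _⟩⟩

lemma bP_pos {P : Finset (Fin (n-1))} {i : Fin (n-1)} (hi : i ∈ P) :
    0 < bP t P ω i := by
  apply Finset.sum_pos (fun w _ => hω w)
  refine ⟨t.parent (childV i), Finset.mem_filter.2 ⟨parent_childV_mem_nestVtx hi, ?_⟩⟩
  intro hc
  have := ancU_val_le (isAnc_iff_ancU.1 hc)
  have := t.parent_lt (childV i) (childV_pos i)
  omega

lemma aP_mono {P Q : Finset (Fin (n-1))} (h : P ⊆ Q) {i : Fin (n-1)} :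
    aP t P ω i ≤ aP t Q ω i := by
  apply Finset.sum_le_sum_of_subset_of_nonneg
  · exact Finset.filter_subset_filter _ (nestVtx_mono h)
  · exact fun w _ _ => (hω w).le

lemma bP_mono {P Q : Finset (Fin (n-1))} (h : P ⊆ Q) {i : Fin (n-1)} :
    bP t P ω i ≤ bP t Q ω i := by
  apply Finset.sum_le_sum_of_subset_of_nonneg
  · exact Finset.filter_subset_filter _ (nestVtx_mono h)
  · exact fun w _ _ => (hω w).le

lemma prod_aP_bP_lt {P Q : Finset (Fin (n-1))} (hP : IsNest t P) (hPQ : P ⊂ Q)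
    {i : Fin (n-1)} (hi : i ∈ P) :
    aP t P ω i * bP t P ω i < aP t Q ω i * bP t Q ω i := by
  obtain ⟨z, hzQ, hzN⟩ := nestVtx_exists_new hP hPQ
  have hsub := hPQ.subset
  have key : ∀ (p : Fin n → Prop) [DecidablePred p], p z →
      (∑ w ∈ (nestVtx t P).filter p, ω w) + ω z ≤ ∑ w ∈ (nestVtx t Q).filter p, ω w := by
    intro p _ hpz
    have h1 : insert z ((nestVtx t P).filter p) ⊆ (nestVtx t Q).filter p := by
      intro x hx
      rcases Finset.mem_insert.1 hx with rfl | hx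
      · exact Finset.mem_filter.2 ⟨hzQ, hpz⟩
      · obtain ⟨hx1, hx2⟩ := Finset.mem_filter.1 hx
        exact Finset.mem_filter.2 ⟨nestVtx_mono hsub hx1, hx2⟩
    have h2 : z ∉ (nestVtx t P).filter p := fun hc => hzN (Finset.mem_filter.1 hc).1
    calc (∑ w ∈ (nestVtx t P).filter p, ω w) + ω z
        = ∑ w ∈ insert z ((nestVtx t P).filter p), ω w := by
          rw [Finset.sum_insert h2]; ring
      _ ≤ ∑ w ∈ (nestVtx t Q).filter p, ω w :=
          Finset.sum_le_sum_of_subset_of_nonneg h1 (fun w _ _ => (hω w).le)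
  by_cases hz : isAnc t (childV i) z
  · have ha : aP t P ω i < aP t Q ω i := by
      have := key (fun w => isAnc t (childV i) w) hz
      have hωz := hω z
      unfold aP
      omega
    calc aP t P ω i * bP t P ω i
        < aP t Q ω i * bP t P ω i :=
          mul_lt_mul_of_pos_right ha (bP_pos hω hi)
      _ ≤ aP t Q ω i * bP t Q ω i :=
          mul_le_mul_of_nonneg_left (bP_mono hω hsub) (le_of_lt (lt_of_lt_of_le (aP_pos hω hi) ha.le))
  · have hb : bP t P ω i < bP t Q ω i := by
      have := key (fun w => ¬ isAnc t (childV i) w) hz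
      have hωz := hω z
      unfold bP
      omega
    calc aP t P ω i * bP t P ω i
        ≤ aP t Q ω i * bP t P ω i :=
          mul_le_mul_of_nonneg_right (aP_mono hω hsub) (le_of_lt (bP_pos hω hi))
      _ < aP t Q ω i * bP t Q ω i :=
          mul_lt_mul_of_pos_left hb (lt_of_lt_of_le (aP_pos hω hi) (aP_mono hω hsub))


omit hω

lemma pathE_nonempty {u w : Fin n} (huw : u ≠ w) : (pathE t u w).Nonempty := by
  obtain ⟨⟨i, hi, -⟩, -, -⟩ := pconn_of_ne (u.val + w.val + 1) u w (by omega) huw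
  exact ⟨i, hi⟩

lemma exists_unique_minNest_path (hn : 2 ≤ n) (hmax : IsMaxNesting t 𝒩)
    {u w : Fin n} (huw : u ≠ w) :
    ∃! i : Fin (n-1), pathE t u w ⊆ minNest 𝒩 i ∧ i ∈ pathE t u w := by
  classical
  have hnesting := hmax.1
  obtain ⟨i1, hi1⟩ := pathE_nonempty (t := t) huw
  set Pa := pathE t u w with hPa
  -- the smallest nest containing Pa
  set F := 𝒩.filter (fun Q => Pa ⊆ Q) with hF
  have hFne : F.Nonempty := ⟨Finset.univ, by
    rw [hF, Finset.mem_filter]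
    exact ⟨hnesting.2.1, Finset.subset_univ _⟩⟩
  obtain ⟨Ps, hPsF, hPsmin⟩ : ∃ Ps ∈ F, ∀ P ∈ F, ¬ P < Ps := by
    obtain ⟨m, hm⟩ := Finset.exists_minimal hFne
    exact ⟨m, hm.1, fun P hP h => h.not_ge (hm.2 hP h.le)⟩
  have hPs : Ps ∈ 𝒩 ∧ Pa ⊆ Ps := by rw [hF, Finset.mem_filter] at hPsF; exact hPsF
  have hle : ∀ Q ∈ F, Ps ⊆ Q := by
    intro Q hQF
    have hQ := hQF
    rw [hF, Finset.mem_filter] at hQ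
    rcases nests_comparable hnesting hPs.1 hQ.1 (hPs.2 hi1) (hQ.2 hi1) with h1 | h1
    · exact h1
    · rcases (Finset.le_iff_subset.2 h1).lt_or_eq with h2 | h2
      · exact absurd h2 (hPsmin Q hQF)
      · exact h2.ge
  have hex : ∃ i ∈ Pa, Pa ⊆ minNest 𝒩 i := by
    by_contra hno
    push_neg at hno
    have hssub : ∀ i ∈ Pa, minNest 𝒩 i ⊂ Ps := by
      intro i hi
      have hsub : minNest 𝒩 i ⊆ Ps := (minNest_spec hnesting i).2.2 Ps hPs.1 (hPs.2 hi)
      refine lt_of_le_of_ne hsub ?_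
      intro hc
      exact hno i hi (hc ▸ hPs.2)
    set T := 𝒩.filter (fun Q => minNest 𝒩 i1 ⊆ Q ∧ Q ⊂ Ps) with hT
    have hTne : T.Nonempty := ⟨minNest 𝒩 i1, by
      rw [hT, Finset.mem_filter]
      exact ⟨(minNest_spec hnesting i1).1, le_rfl, hssub i1 hi1⟩⟩
    obtain ⟨C, hCT, hCmax⟩ : ∃ C ∈ T, ∀ P ∈ T, ¬ C < P := by
      obtain ⟨m, hm⟩ := Finset.exists_maximal hTne
      exact ⟨m, hm.1, fun P hP h => h.not_ge (hm.2 hP h.le)⟩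
    rw [hT, Finset.mem_filter] at hCT
    obtain ⟨hC𝒩, hminC, hCPs⟩ := hCT
    have hPaC : ¬ Pa ⊆ C := by
      intro hc
      have : C ∈ F := by rw [hF, Finset.mem_filter]; exact ⟨hC𝒩, hc⟩
      exact absurd (hle C this) (by intro h2; exact (lt_irrefl Ps) (lt_of_le_of_lt h2 hCPs))
    obtain ⟨f, hfPa, hfC⟩ := Finset.not_subset.1 hPaC
    have hi1C : i1 ∈ C := hminC (minNest_spec hnesting i1).2.1
    obtain ⟨-, -, hconn⟩ := pconn_of_ne (u.val + w.val + 1) u w (by omega) huw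
    obtain ⟨x, y, ⟨hxPa, hyPa, hxy⟩, hxC, hyC⟩ :=
      rtg_switch (C := fun z => z ∈ C) (hconn i1 hi1 f hfPa) hi1C hfC
    have hQy := minNest_spec hnesting y
    rcases nests_comparable_of_adj hnesting hC𝒩 hQy.1 hxC hQy.2.1 hxy with h1 | h1
    · have hQyT : minNest 𝒩 y ∈ T := by
        rw [hT, Finset.mem_filter]
        exact ⟨hQy.1, hminC.trans h1, hssub y hyPa⟩
      rcases (Finset.le_iff_subset.2 h1).lt_or_eq with h2 | h2
      · exact hCmax _ hQyT h2
      · exact hyC (h2 ▸ hQy.2.1)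
    · exact hyC (h1 hQy.2.1)
  obtain ⟨i0, hi0Pa, hi0⟩ := hex
  refine ⟨i0, ⟨hi0, hi0Pa⟩, ?_⟩
  intro i2 ⟨hi2, hi2Pa⟩
  have h12 : minNest 𝒩 i0 ⊆ minNest 𝒩 i2 :=
    (minNest_spec hnesting i0).2.2 _ (minNest_spec hnesting i2).1 (hi2 hi0Pa)
  have h21 : minNest 𝒩 i2 ⊆ minNest 𝒩 i0 :=
    (minNest_spec hnesting i2).2.2 _ (minNest_spec hnesting i0).1 (hi0 hi2Pa)
  exact minNest_injective hn hmax (le_antisymm h21 h12)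


def Af (t : PTree n) (𝒩 : Finset (Finset (Fin (n - 1)))) (i : Fin (n-1)) : Finset (Fin n) :=
  (nestVtx t (minNest 𝒩 i)).filter (fun x => isAnc t (childV i) x)

def Bf (t : PTree n) (𝒩 : Finset (Finset (Fin (n - 1)))) (i : Fin (n-1)) : Finset (Fin n) :=
  (nestVtx t (minNest 𝒩 i)).filter (fun x => ¬ isAnc t (childV i) x)

lemma sum_ite_mem_univ {α : Type*} [Fintype α] [DecidableEq α] (s : Finset α) (g : α → ℤ) :
    ∑ u, (if u ∈ s then g u else 0) = ∑ u ∈ s, g u := by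
  rw [Finset.sum_ite_mem, Finset.univ_inter]

lemma Mz_expand (ω : Fin n → ℤ) (i : Fin (n-1)) :
    aP t (minNest 𝒩 i) ω i * bP t (minNest 𝒩 i) ω i =
      ∑ u, ∑ w, (if u ∈ Af t 𝒩 i ∧ w ∈ Bf t 𝒩 i then ω u * ω w else 0) := by
  have ha : aP t (minNest 𝒩 i) ω i = ∑ u, (if u ∈ Af t 𝒩 i then ω u else 0) :=
    (sum_ite_mem_univ _ _).symm
  have hb : bP t (minNest 𝒩 i) ω i = ∑ w, (if w ∈ Bf t 𝒩 i then ω w else 0) :=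
    (sum_ite_mem_univ _ _).symm
  rw [ha, hb, Finset.sum_mul_sum]
  refine Finset.sum_congr rfl fun u _ => Finset.sum_congr rfl fun w _ => ?_
  rw [ite_zero_mul_ite_zero]

/-- The pairwise separation condition for an edge, symmetric form. -/
lemma F_add (hn : 2 ≤ n) (hmax : IsMaxNesting t 𝒩) (ω : Fin n → ℤ)
    {u w : Fin n} (huw : u ≠ w) (i : Fin (n-1)) :
    (if u ∈ Af t 𝒩 i ∧ w ∈ Bf t 𝒩 i then ω u * ω w else 0) +
    (if w ∈ Af t 𝒩 i ∧ u ∈ Bf t 𝒩 i then ω w * ω u else 0) =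
    (if pathE t u w ⊆ minNest 𝒩 i ∧ i ∈ pathE t u w then ω u * ω w else 0) := by
  classical
  have hnesting := hmax.1
  have hnest : IsNest t (minNest 𝒩 i) := hnesting.1 _ (minNest_spec hnesting i).1
  -- forward: membership ⇒ path condition
  have fwd : ∀ (x y : Fin n), x ∈ Af t 𝒩 i → y ∈ Bf t 𝒩 i →
      pathE t x y ⊆ minNest 𝒩 i ∧ i ∈ pathE t x y := by
    intro x y hx hy
    obtain ⟨hx1, hx2⟩ := Finset.mem_filter.1 hx
    obtain ⟨hy1, hy2⟩ := Finset.mem_filter.1 hy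
    constructor
    · exact pathE_subset_nest (x.val + y.val + 1) _ x y (by omega) hnest hx1 hy1
    · rw [mem_pathE]
      exact Or.inl ⟨isAnc_iff_ancU.1 hx2, fun hc => hy2 (isAnc_iff_ancU.2 hc)⟩
  -- backward: path condition ⇒ membership (in the appropriate order)
  have bwd : pathE t u w ⊆ minNest 𝒩 i → i ∈ pathE t u w →
      (u ∈ Af t 𝒩 i ∧ w ∈ Bf t 𝒩 i) ∨ (w ∈ Af t 𝒩 i ∧ u ∈ Bf t 𝒩 i) := by
    intro hsub hiP
    obtain ⟨⟨e1, he1, hor1⟩, ⟨e2, he2, hor2⟩, -⟩ :=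
      pconn_of_ne (u.val + w.val + 1) u w (by omega) huw
    have hu : u ∈ nestVtx t (minNest 𝒩 i) :=
      nestVtx_mono hsub (mem_nestVtx.2 ⟨e1, he1, hor1⟩)
    have hw : w ∈ nestVtx t (minNest 𝒩 i) :=
      nestVtx_mono hsub (mem_nestVtx.2 ⟨e2, he2, hor2⟩)
    rcases mem_pathE.1 hiP with ⟨h1, h2⟩ | ⟨h1, h2⟩
    · exact Or.inl ⟨Finset.mem_filter.2 ⟨hu, isAnc_iff_ancU.2 h1⟩,
        Finset.mem_filter.2 ⟨hw, fun hc => h2 (isAnc_iff_ancU.1 hc)⟩⟩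
    · exact Or.inr ⟨Finset.mem_filter.2 ⟨hw, isAnc_iff_ancU.2 h1⟩,
        Finset.mem_filter.2 ⟨hu, fun hc => h2 (isAnc_iff_ancU.1 hc)⟩⟩
  have hdisj : ¬ ((u ∈ Af t 𝒩 i ∧ w ∈ Bf t 𝒩 i) ∧ (w ∈ Af t 𝒩 i ∧ u ∈ Bf t 𝒩 i)) := by
    rintro ⟨⟨hu1, -⟩, ⟨-, hu2⟩⟩
    exact (Finset.mem_filter.1 hu2).2 (Finset.mem_filter.1 hu1).2
  have hsymm : pathE t w u = pathE t u w := pathE_symm w u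
  by_cases hA : u ∈ Af t 𝒩 i ∧ w ∈ Bf t 𝒩 i
  · have hcond := fwd u w hA.1 hA.2
    have hB : ¬ (w ∈ Af t 𝒩 i ∧ u ∈ Bf t 𝒩 i) := fun hB => hdisj ⟨hA, hB⟩
    rw [if_pos hA, if_neg hB, if_pos hcond]
    ring
  · by_cases hB : w ∈ Af t 𝒩 i ∧ u ∈ Bf t 𝒩 i
    · have hcond' := fwd w u hB.1 hB.2
      rw [hsymm] at hcond'
      rw [if_neg hA, if_pos hB, if_pos hcond']
      ring
    · have hcond : ¬ (pathE t u w ⊆ minNest 𝒩 i ∧ i ∈ pathE t u w) := by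
        intro hc
        rcases bwd hc.1 hc.2 with h | h
        · exact hA h
        · exact hB h
      rw [if_neg hA, if_neg hB, if_neg hcond]
      ring

lemma S_add (hn : 2 ≤ n) (hmax : IsMaxNesting t 𝒩) (ω : Fin n → ℤ) (u w : Fin n) :
    (∑ i, ((if u ∈ Af t 𝒩 i ∧ w ∈ Bf t 𝒩 i then ω u * ω w else 0) +
           (if w ∈ Af t 𝒩 i ∧ u ∈ Bf t 𝒩 i then ω w * ω u else 0))) =
    (if u = w then 0 else ω u * ω w) := by
  classical
  by_cases huw : u = w
  · subst huw
    rw [if_pos rfl]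
    apply Finset.sum_eq_zero
    intro i _
    have hz : ¬ (u ∈ Af t 𝒩 i ∧ u ∈ Bf t 𝒩 i) := by
      rintro ⟨h1, h2⟩
      exact (Finset.mem_filter.1 h2).2 (Finset.mem_filter.1 h1).2
    simp [hz]
  · rw [if_neg huw]
    rw [Finset.sum_congr rfl (fun i _ => F_add hn hmax ω huw i)]
    obtain ⟨istar, histar, huniq⟩ := exists_unique_minNest_path hn hmax huw
    have hpt : ∀ i : Fin (n-1),
        (if pathE t u w ⊆ minNest 𝒩 i ∧ i ∈ pathE t u w then ω u * ω w else 0)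
        = (if i = istar then ω u * ω w else 0) := by
      intro i
      by_cases hc : pathE t u w ⊆ minNest 𝒩 i ∧ i ∈ pathE t u w
      · rw [if_pos hc, if_pos (huniq i hc)]
      · rw [if_neg hc, if_neg (fun h : i = istar => hc (h ▸ histar))]
    rw [Finset.sum_congr rfl (fun i _ => hpt i)]
    simp

/-- The sum of the coordinates of `M(t,𝒩,ω)` does not depend on the maximal nesting. -/
lemma sum_Mz_invariant (hn : 2 ≤ n) {𝒩 𝒩' : Finset (Finset (Fin (n - 1)))}
    (hmax : IsMaxNesting t 𝒩) (hmax' : IsMaxNesting t 𝒩') (ω : Fin n → ℤ) :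
    ∑ i, aP t (minNest 𝒩 i) ω i * bP t (minNest 𝒩 i) ω i =
    ∑ i, aP t (minNest 𝒩' i) ω i * bP t (minNest 𝒩' i) ω i := by
  classical
  have expand : ∀ (𝒜 : Finset (Finset (Fin (n - 1)))), IsMaxNesting t 𝒜 →
      ∑ i, aP t (minNest 𝒜 i) ω i * bP t (minNest 𝒜 i) ω i =
      ∑ u, ∑ w, ∑ i, (if u ∈ Af t 𝒜 i ∧ w ∈ Bf t 𝒜 i then ω u * ω w else 0) := by
    intro 𝒜 _
    rw [Finset.sum_congr rfl (fun i _ => Mz_expand ω i)]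
    rw [Finset.sum_comm]
    exact Finset.sum_congr rfl fun u _ => Finset.sum_comm
  rw [expand 𝒩 hmax, expand 𝒩' hmax']
  -- define the difference function
  set g : Fin n → Fin n → ℤ := fun u w =>
    (∑ i, (if u ∈ Af t 𝒩 i ∧ w ∈ Bf t 𝒩 i then ω u * ω w else 0)) -
    (∑ i, (if u ∈ Af t 𝒩' i ∧ w ∈ Bf t 𝒩' i then ω u * ω w else 0)) with hg
  have hanti : ∀ u w, g u w + g w u = 0 := by
    intro u w
    have h1 := S_add hn hmax ω u w
    have h2 := S_add hn hmax' ω u w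
    rw [Finset.sum_add_distrib] at h1 h2
    simp only [hg]
    omega
  suffices h : ∑ u, ∑ w, g u w = 0 by
    have hsplit : ∑ u, ∑ w, g u w =
        (∑ u, ∑ w, ∑ i, (if u ∈ Af t 𝒩 i ∧ w ∈ Bf t 𝒩 i then ω u * ω w else 0)) -
        (∑ u, ∑ w, ∑ i, (if u ∈ Af t 𝒩' i ∧ w ∈ Bf t 𝒩' i then ω u * ω w else 0)) := by
      rw [← Finset.sum_sub_distrib]
      refine Finset.sum_congr rfl fun u _ => ?_
      rw [← Finset.sum_sub_distrib]
    rw [hsplit] at h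
    omega
  have hswap : ∑ u, ∑ w, g u w = ∑ u, ∑ w, g w u := Finset.sum_comm
  have h2 : (∑ u, ∑ w, g u w) + (∑ u, ∑ w, g u w) = 0 := by
    nth_rewrite 2 [hswap]
    rw [← Finset.sum_add_distrib]
    rw [Finset.sum_congr rfl (fun u (_ : u ∈ Finset.univ) => (Finset.sum_add_distrib).symm)]
    rw [Finset.sum_congr rfl (fun u (_ : u ∈ Finset.univ) =>
      Finset.sum_congr rfl (fun w (_ : w ∈ Finset.univ) => hanti u w))]
    simp
  omega

end S18


/-- Let `𝒩 ≺ 𝒩'` be a covering relation of the poset of maximal nestings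
`(MN(t), <)`: `𝒩` and `𝒩'` are maximal nestings differing in exactly one nest
(`𝒩' = (𝒩 \ {N}) ∪ {N'}`), and the unique edges `j, j'` with `min𝒩(j) = N` and
`min𝒩'(j') = N'` satisfy `j < j'`. Then the edge vector from `M(t,𝒩,ω)` to `M(t,𝒩',ω)` has
the form `(0,…,0, x, 0,…,0, -x, 0,…,0)` with `x > 0` in position `j` and `-x` in position
`j'`. Consequently any vector `v` with strictly decreasing coordinates satisfies
`⟨M(t,𝒩',ω) - M(t,𝒩,ω), v⟩ > 0`, i.e. `v` induces the poset of maximal nestings on the set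
of vertices of `P_{(t,ω)}`. -/
theorem stmt18 {n : ℕ} (hn : 2 ≤ n) (t : PTree n) (ω : Fin n → ℤ) (hω : ∀ u, 0 < ω u)
    (𝒩 𝒩' : Finset (Finset (Fin (n - 1))))
    (h𝒩 : IsMaxNesting t 𝒩) (h𝒩' : IsMaxNesting t 𝒩')
    (N N' : Finset (Fin (n - 1)))
    (hN : N ∈ 𝒩) (hN' : N' ∈ 𝒩') (hNn : N ∉ 𝒩') (hN'n : N' ∉ 𝒩)
    (hdiff : 𝒩' = insert N' (𝒩.erase N))
    (j j' : Fin (n - 1))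
    (hj : minNest 𝒩 j = N) (hj' : minNest 𝒩' j' = N')
    (hjj' : j < j') :
    (∃ x : ℝ, 0 < x ∧ ∀ i, MPoint t 𝒩' ω i - MPoint t 𝒩 ω i =
        if i = j then x else if i = j' then -x else 0) ∧
    (∀ v : Vec (n - 1), (∀ a b : Fin (n - 1), a < b → v b < v a) →
      0 < dot v (MPoint t 𝒩' ω - MPoint t 𝒩 ω)) := by
  classical
  have hji : j ≠ j' := Fin.ne_of_lt hjj'
  have hnesting := h𝒩.1
  have hnesting' := h𝒩'.1
  have inj := S18.minNest_injective hn h𝒩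
  have inj' := S18.minNest_injective hn h𝒩'
  -- the minimal nests are unchanged away from j and j'
  have hoff : ∀ i : Fin (n-1), i ≠ j → i ≠ j' → minNest 𝒩' i = minNest 𝒩 i := by
    intro i hij hij'
    have hspec := S18.minNest_spec hnesting i
    have hmN : minNest 𝒩 i ≠ N := by
      intro hc
      exact hij (inj (hc.trans hj.symm))
    have hm𝒩' : minNest 𝒩 i ∈ 𝒩' := by
      rw [hdiff]
      exact Finset.mem_insert_of_mem (Finset.mem_erase.2 ⟨hmN, hspec.1⟩)
    apply S18.minNest_eq_of hnesting' hm𝒩' hspec.2.1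
    intro P hP hiP
    rw [hdiff] at hP
    rcases Finset.mem_insert.1 hP with rfl | hP
    · -- P = N'
      have hm' := S18.minNest_spec hnesting' i
      have hm'N' : minNest 𝒩' i ⊆ P := hm'.2.2 P hN' hiP
      have hmem : minNest 𝒩' i ∈ insert P (𝒩.erase N) := hdiff ▸ hm'.1
      rcases Finset.mem_insert.1 hmem with hc | hc
      · exact absurd (inj' (hc.trans hj'.symm)) hij'
      · exact (hspec.2.2 _ (Finset.mem_of_mem_erase hc) hm'.2.1).trans hm'N'
    · exact hspec.2.2 P (Finset.mem_of_mem_erase hP) hiP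
  -- N ⊊ minNest 𝒩' j
  have hKj := S18.minNest_spec hnesting' j
  have hKjN' : minNest 𝒩' j ≠ N' := by
    intro hc
    exact hji (inj' (hc.trans hj'.symm))
  have hKj𝒩 : minNest 𝒩' j ∈ 𝒩 := by
    have hmem : minNest 𝒩' j ∈ insert N' (𝒩.erase N) := by
      rw [← hdiff]; exact hKj.1
    rcases Finset.mem_insert.1 hmem with hc | hc
    · exact absurd hc hKjN'
    · exact Finset.mem_of_mem_erase hc
  have hjN : j ∈ N := by rw [← hj]; exact (S18.minNest_spec hnesting j).2.1
  have hNKj : N ⊂ minNest 𝒩' j := by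
    rw [Finset.ssubset_iff_subset_ne]
    refine ⟨?_, ?_⟩
    · rw [← hj]
      exact (S18.minNest_spec hnesting j).2.2 _ hKj𝒩 hKj.2.1
    · intro hc
      exact hNn (hc ▸ hKj.1)
  -- N' ⊊ minNest 𝒩 j'
  have hKj' := S18.minNest_spec hnesting j'
  have hKj'N : minNest 𝒩 j' ≠ N := by
    intro hc
    exact hji (inj (hj.symm ▸ hc) : j' = j).symm
  have hKj'𝒩' : minNest 𝒩 j' ∈ 𝒩' := by
    rw [hdiff]
    exact Finset.mem_insert_of_mem (Finset.mem_erase.2 ⟨hKj'N, hKj'.1⟩)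
  have hj'N' : j' ∈ N' := by rw [← hj']; exact (S18.minNest_spec hnesting' j').2.1
  have hN'Kj' : N' ⊂ minNest 𝒩 j' := by
    rw [Finset.ssubset_iff_subset_ne]
    refine ⟨?_, ?_⟩
    · rw [← hj']
      exact (S18.minNest_spec hnesting' j').2.2 _ hKj'𝒩' hKj'.2.1
    · intro hc
      exact hN'n (hc ▸ hKj'.1)
  -- the coordinatewise difference in ℤ
  set D : Fin (n-1) → ℤ := fun i =>
    S18.aP t (minNest 𝒩' i) ω i * S18.bP t (minNest 𝒩' i) ω i -
    S18.aP t (minNest 𝒩 i) ω i * S18.bP t (minNest 𝒩 i) ω i with hD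
  have halpha : ∀ (𝒜 : Finset (Finset (Fin (n-1)))) (i : Fin (n-1)),
      alphaN t 𝒜 ω i = S18.aP t (minNest 𝒜 i) ω i := fun _ _ => rfl
  have hbeta : ∀ (𝒜 : Finset (Finset (Fin (n-1)))) (i : Fin (n-1)),
      betaN t 𝒜 ω i = S18.bP t (minNest 𝒜 i) ω i := fun _ _ => rfl
  have hDj : 0 < D j := by
    rw [hD]
    simp only
    rw [hj]
    have := S18.prod_aP_bP_lt hω (hnesting.1 N hN) hNKj hjN
    omega
  have hDj' : D j' < 0 := by
    rw [hD]
    simp only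
    rw [hj']
    have := S18.prod_aP_bP_lt hω (hnesting'.1 N' hN') hN'Kj' hj'N'
    omega
  have hD0 : ∀ i, i ≠ j → i ≠ j' → D i = 0 := by
    intro i h1 h2
    rw [hD]
    simp only
    rw [hoff i h1 h2]
    ring
  have hsum : ∑ i, D i = 0 := by
    rw [hD]
    rw [Finset.sum_sub_distrib]
    rw [S18.sum_Mz_invariant hn h𝒩 h𝒩' ω]
    ring
  have hsum2 : ∑ i, D i = D j + D j' := by
    have hsub : ({j, j'} : Finset (Fin (n-1))) ⊆ Finset.univ := Finset.subset_univ _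
    rw [← Finset.sum_subset hsub (fun x _ hx => by
      rw [Finset.mem_insert, Finset.mem_singleton] at hx
      push_neg at hx
      exact hD0 x hx.1 hx.2)]
    exact Finset.sum_pair hji
  have hDjj' : D j' = - D j := by omega
  have hMdiff : ∀ i, MPoint t 𝒩' ω i - MPoint t 𝒩 ω i = ((D i : ℤ) : ℝ) := by
    intro i
    rw [hD]
    simp only [MPoint, halpha, hbeta]
    push_cast
    ring
  have part1 : ∃ x : ℝ, 0 < x ∧ ∀ i, MPoint t 𝒩' ω i - MPoint t 𝒩 ω i =
      if i = j then x else if i = j' then -x else 0 := by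
    refine ⟨((D j : ℤ) : ℝ), by exact_mod_cast hDj, ?_⟩
    intro i
    rw [hMdiff i]
    by_cases h1 : i = j
    · rw [if_pos h1, h1]
    · rw [if_neg h1]
      by_cases h2 : i = j'
      · rw [if_pos h2, h2, hDjj']
        push_cast
        ring
      · rw [if_neg h2, hD0 i h1 h2]
        norm_num
  refine ⟨part1, ?_⟩
  intro v hv
  obtain ⟨x, hxpos, hx⟩ := part1
  have hptw : ∀ i : Fin (n-1), v i * (MPoint t 𝒩' ω - MPoint t 𝒩 ω) i =
      (if i = j then v j * x else 0) + (if i = j' then v j' * (-x) else 0) := by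
    intro i
    have : (MPoint t 𝒩' ω - MPoint t 𝒩 ω) i = MPoint t 𝒩' ω i - MPoint t 𝒩 ω i := rfl
    rw [this, hx i]
    by_cases h1 : i = j
    · rw [if_pos h1, if_pos h1, if_neg (h1 ▸ hji), h1]
      ring
    · rw [if_neg h1, if_neg h1]
      by_cases h2 : i = j'
      · rw [if_pos h2, if_pos h2, h2]
        ring
      · rw [if_neg h2, if_neg h2]
        ring
  unfold dot
  rw [Finset.sum_congr rfl (fun i _ => hptw i)]
  rw [Finset.sum_add_distrib, Finset.sum_ite_eq' Finset.univ j (fun _ => v j * x),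
    Finset.sum_ite_eq' Finset.univ j' (fun _ => v j' * (-x))]
  simp only [Finset.mem_univ, if_true]
  have hvjj : v j' < v j := hv j j' hjj'
  nlinarith

end
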